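/- Let V be a set of valuations, let KB be a finite collection of subsets of V, and let A ⊆ V be a nonempty set. Suppose H is a collection of subsets of V such that H ∩ X ≠ ∅ for every kernel X of KB with respect to A. Then (⋂ (KB \ H)) ∩ A ≠ ∅, i.e., the family obtained from KB by removing the members of H is consistent with A. -/

import Mathlib

/-- `X` is a kernel of the collection `KB` with respect to `A`: `X` is a
subcollection of `KB` whose intersection is inconsistent with `A`, while the
intersection of every proper subcollection of `X` is consistent with `A`.
(Here `⋂₀ ∅ = Set.univ`, so the empty collection is consistent with any
nonempty `A`.) -/
def IsKernel {V : Type*} (KB : Set (Set V)) (A : Set V) (X : Set (Set V)) : Prop :=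
  X ⊆ KB ∧ (⋂₀ X) ∩ A = ∅ ∧ ∀ Y ⊂ X, (⋂₀ Y) ∩ A ≠ ∅

theorem remove_hitting_set_consistent {V : Type*} (KB : Set (Set V))
    (hKB : KB.Finite) (A : Set V) (hA : A.Nonempty) (H : Set (Set V))
    (hhit : ∀ X, IsKernel KB A X → (H ∩ X).Nonempty) :
    (⋂₀ (KB \ H)) ∩ A ≠ ∅ := by
  intro hcon
  -- the family of inconsistent subcollections of KB \ H
  set S : Set (Set (Set V)) := {X | X ⊆ KB \ H ∧ (⋂₀ X) ∩ A = ∅} with hS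
  have hSfin : S.Finite := by
    have : S ⊆ {X | X ⊆ KB \ H} := fun X hX => hX.1
    exact ((hKB.sdiff (t := H)).finite_subsets).subset this
  have hSne : S.Nonempty := ⟨KB \ H, le_refl _, hcon⟩
  obtain ⟨X, hXS, hXmin⟩ := hSfin.exists_minimalFor id S hSne
  have hker : IsKernel KB A X := by
    refine ⟨hXS.1.trans (Set.diff_subset), hXS.2, ?_⟩
    intro Y hY hYcon
    have hYS : Y ∈ S := ⟨hY.1.trans hXS.1, hYcon⟩
    have := hXmin hYS hY.1
    simp only [id] at this; exact hY.2 this.subset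
  obtain ⟨h, hH, hX⟩ := hhit X hker
  exact (hXS.1 hX).2 hH
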